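/- If G is a finite bipartite graph with at least one vertex, then the total domination number of the prism of G equals its paired-domination number: γ_t(G □ K₂) = γ_pr(G □ K₂). -/

import Mathlib

open SimpleGraph

/-- The complete graph on two vertices. -/
abbrev K2 : SimpleGraph (Fin 2) := ⊤

/-- `S` is a dominating set of `G`: every vertex not in `S` is adjacent to a vertex of `S`. -/
def IsDominatingSet {V : Type*} (G : SimpleGraph V) (S : Finset V) : Prop :=
  ∀ v : V, v ∉ S → ∃ u ∈ S, G.Adj v u

/-- `S` is a total dominating set of `G`: every vertex is adjacent to a vertex of `S`. -/
def IsTotalDominatingSet {V : Type*} (G : SimpleGraph V) (S : Finset V) : Prop :=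
  ∀ v : V, ∃ u ∈ S, G.Adj v u

/-- The domination number of `G`. -/
noncomputable def dominationNumber {V : Type*} (G : SimpleGraph V) : ℕ :=
  sInf {n : ℕ | ∃ S : Finset V, IsDominatingSet G S ∧ S.card = n}

/-- The total domination number of `G`. -/
noncomputable def totalDominationNumber {V : Type*} (G : SimpleGraph V) : ℕ :=
  sInf {n : ℕ | ∃ S : Finset V, IsTotalDominatingSet G S ∧ S.card = n}

/-- `S` is a paired-dominating set of `G`: every vertex is adjacent to a vertex of `S`,
and the subgraph induced by `S` contains a perfect matching, encoded as a fixed-point-free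
involution on `S` pairing each vertex of `S` with an adjacent vertex of `S`. -/
def IsPairedDominatingSet {V : Type*} (G : SimpleGraph V) (S : Finset V) : Prop :=
  (∀ v : V, ∃ u ∈ S, G.Adj v u) ∧
    ∃ f : V → V, ∀ v ∈ S, f v ∈ S ∧ G.Adj v (f v) ∧ f (f v) = v

/-- The paired-domination number of `G`. -/
noncomputable def pairedDominationNumber {V : Type*} (G : SimpleGraph V) : ℕ :=
  sInf {n : ℕ | ∃ S : Finset V, IsPairedDominatingSet G S ∧ S.card = n}

lemma fin2_succ_of_ne : ∀ (a b : Fin 2), a ≠ b → b = a + 1 := by decide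
lemma fin2_ne_succ : ∀ (a : Fin 2), a ≠ a + 1 := by decide
lemma fin2_succ_succ : ∀ (a : Fin 2), a + 1 + 1 = a := by decide
lemma fin2_ne_succ_self : ∀ (a : Fin 2), a ≠ a + 1 := by decide

/-- vertical adjacency in the prism -/
lemma prism_vert_adj {V : Type*} (G : SimpleGraph V) (v : V) (i : Fin 2) :
    (G □ K2).Adj (v, i) (v, i + 1) := by
  rw [SimpleGraph.boxProd_adj]
  exact Or.inr ⟨by simp [fin2_ne_succ i], rfl⟩

/-- From a dominating set of `G`, build a paired-dominating set of the prism. -/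
lemma paired_of_dom {V : Type*} [Fintype V] (G : SimpleGraph V) (C : Finset V)
    (hC : IsDominatingSet G C) :
    IsPairedDominatingSet (G □ K2) (C ×ˢ (Finset.univ : Finset (Fin 2))) := by
  constructor
  · rintro ⟨v, i⟩
    by_cases hv : v ∈ C
    · exact ⟨(v, i + 1), by simp [hv], prism_vert_adj G v i⟩
    · obtain ⟨u, hu, hadj⟩ := hC v hv
      exact ⟨(u, i), by simp [hu], by
        rw [SimpleGraph.boxProd_adj]; exact Or.inl ⟨hadj, rfl⟩⟩
  · refine ⟨fun p => (p.1, p.2 + 1), ?_⟩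
    rintro ⟨v, i⟩ hp
    simp only [Finset.mem_product, Finset.mem_univ, and_true] at hp
    refine ⟨by simp [hp], prism_vert_adj G v i, ?_⟩
    show (v, i + 1 + 1) = (v, i)
    rw [fin2_succ_succ]

/-- From a total dominating set of the prism of a bipartite graph, extract a dominating set
of `G` of at most half the size. -/
lemma dom_of_total {V : Type*} [Fintype V] (G : SimpleGraph V)
    (c : G.Coloring (Fin 2)) (D : Finset (V × Fin 2))
    (hD : IsTotalDominatingSet (G □ K2) D) :
    ∃ C : Finset V, IsDominatingSet G C ∧ 2 * C.card ≤ D.card := by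
  classical
  set Cf : Fin 2 → Finset V :=
    fun e => Finset.univ.filter (fun v => (v, c v + e) ∈ D) with hCf
  have hdom : ∀ e, IsDominatingSet G (Cf e) := by
    intro e v hv
    simp only [hCf, Finset.mem_filter, Finset.mem_univ, true_and] at hv
    obtain ⟨u, hu, hadj⟩ := hD (v, c v + e + 1)
    rw [SimpleGraph.boxProd_adj] at hadj
    rcases hadj with ⟨hGadj, h2⟩ | ⟨h2, h1⟩
    · refine ⟨u.1, ?_, hGadj⟩
      simp only [hCf, Finset.mem_filter, Finset.mem_univ, true_and]
      have hcu : c u.1 = c v + 1 := fin2_succ_of_ne _ _ (c.valid hGadj)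
      have heq : (u.1, c u.1 + e) = u := by
        have : c u.1 + e = u.2 := by rw [hcu, ← h2]; exact add_right_comm _ _ _
        rw [this]
      rw [heq]; exact hu
    · exfalso
      have hne : (c v + e + 1 : Fin 2) ≠ u.2 := by
        simpa using h2
      have : u.2 = c v + e := by
        rw [fin2_succ_of_ne _ _ hne, fin2_succ_succ]
      apply hv
      have huv : (v, c v + e) = u := by rw [← this]; exact Prod.ext h1 rfl
      rw [huv]; exact hu
  -- cardinality
  have hinj : ∀ e : Fin 2,
      ((Cf e).image (fun v => (v, c v + e))).card = (Cf e).card := by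
    intro e
    exact Finset.card_image_of_injective _ (fun a b h => congrArg Prod.fst h)
  have hsub : ∀ e : Fin 2, (Cf e).image (fun v => (v, c v + e)) ⊆ D := by
    intro e p hp
    simp only [Finset.mem_image, hCf, Finset.mem_filter, Finset.mem_univ, true_and] at hp
    obtain ⟨v, hv, rfl⟩ := hp
    exact hv
  have hdisj : Disjoint ((Cf 0).image (fun v => (v, c v + 0)))
      ((Cf 1).image (fun v => (v, c v + 1))) := by
    rw [Finset.disjoint_left]
    rintro p hp0 hp1
    simp only [Finset.mem_image] at hp0 hp1
    obtain ⟨v, _, rfl⟩ := hp0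
    obtain ⟨w, _, hw⟩ := hp1
    have h1 : w = v := congrArg Prod.fst hw
    have h2 : c w + 1 = c v + 0 := congrArg Prod.snd hw
    rw [h1] at h2
    exact fin2_ne_succ (c v) (by rw [add_zero] at h2; rw [h2])
  have hcards : (Cf 0).card + (Cf 1).card ≤ D.card := by
    rw [← hinj 0, ← hinj 1, ← Finset.card_union_of_disjoint hdisj]
    exact Finset.card_le_card (Finset.union_subset (hsub 0) (hsub 1))
  rcases le_total (Cf 0).card (Cf 1).card with h | h
  · exact ⟨Cf 0, hdom 0, by omega⟩
  · exact ⟨Cf 1, hdom 1, by omega⟩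

/-- If `G` is a finite bipartite graph with at least one vertex, then
`γ_t(G □ K₂) = γ_pr(G □ K₂)`. -/
theorem totalDomination_eq_pairedDomination_of_bipartite_prism {V : Type*} [Fintype V]
    [Nonempty V] (G : SimpleGraph V) (hbip : G.Colorable 2) :
    totalDominationNumber (G □ K2) = pairedDominationNumber (G □ K2) := by
  classical
  obtain ⟨c⟩ := hbip
  have hunivdom : IsDominatingSet G Finset.univ := by
    intro v hv; exact absurd (Finset.mem_univ v) hv
  have hPne : {n : ℕ | ∃ S : Finset (V × Fin 2),
      IsPairedDominatingSet (G □ K2) S ∧ S.card = n}.Nonempty :=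
    ⟨_, _, paired_of_dom G Finset.univ hunivdom, rfl⟩
  have hTne : {n : ℕ | ∃ S : Finset (V × Fin 2),
      IsTotalDominatingSet (G □ K2) S ∧ S.card = n}.Nonempty :=
    ⟨_, _, (paired_of_dom G Finset.univ hunivdom).1, rfl⟩
  apply le_antisymm
  · obtain ⟨S, hS, hcard⟩ := Nat.sInf_mem hPne
    calc totalDominationNumber (G □ K2) ≤ S.card := Nat.sInf_le ⟨S, hS.1, rfl⟩
      _ = pairedDominationNumber (G □ K2) := hcard
  · obtain ⟨D, hD, hcard⟩ := Nat.sInf_mem hTne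
    obtain ⟨C, hCdom, hle⟩ := dom_of_total G c D hD
    calc pairedDominationNumber (G □ K2)
        ≤ (C ×ˢ (Finset.univ : Finset (Fin 2))).card :=
          Nat.sInf_le ⟨_, paired_of_dom G C hCdom, rfl⟩
      _ = 2 * C.card := by
          rw [Finset.card_product]; simp [Nat.mul_comm]
      _ ≤ D.card := hle
      _ = totalDominationNumber (G □ K2) := hcard
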